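/- For compact E ⊂ ℝ set H_W(E) = E[sup_{t∈E} e^{W(t)}] (which is finite because ξ_W has càdlàg sample paths). For every δ ≥ 0 the limit defining the generalized Pickands constant exists and satisfies H_W^δ = lim_{T→∞} H_W(δℤ ∩ [0,T])/T = inf_{T>0} H_W(δℤ ∩ [0,T])/T ∈ [0,∞); moreover, if δ > 0 then H_W^δ ≤ 1/δ. -/

import Mathlib

open MeasureTheory Filter Set ProbabilityTheory
open scoped ENNReal NNReal Topology

noncomputable section

/-- The grid `δℤ ⊆ ℝ`, with the convention `δℤ = ℝ` when `δ = 0`. -/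
def grid (δ : ℝ) : Set ℝ := if δ = 0 then Set.univ else {t : ℝ | ∃ n : ℤ, t = δ * n}

/-- A function `f : ℝ → ℝ` is càdlàg: right-continuous with left limits. -/
def Cadlag (f : ℝ → ℝ) : Prop :=
  ∀ t : ℝ, ContinuousWithinAt f (Set.Ici t) t ∧ ∃ l : ℝ, Tendsto f (𝓝[<] t) (𝓝 l)

/-- `e^{W(t)}` as an extended nonnegative real. -/
def expW {Ω : Type*} (W : Ω → ℝ → ℝ) (ω : Ω) (t : ℝ) : ℝ≥0∞ :=
  ENNReal.ofReal (Real.exp (W ω t))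

/-- `M^δ = sup_{t ∈ δℤ} e^{W(t)}`. -/
def Msup {Ω : Type*} (W : Ω → ℝ → ℝ) (δ : ℝ) (ω : Ω) : ℝ≥0∞ :=
  ⨆ t ∈ grid δ, expW W ω t

/-- `S^η = η ∑_{t ∈ ηℤ} e^{W(t)}` for `η > 0`, and `S^0 = ∫_ℝ e^{W(t)} dt`. -/
def Ssum {Ω : Type*} (W : Ω → ℝ → ℝ) (η : ℝ) (ω : Ω) : ℝ≥0∞ :=
  if η = 0 then ∫⁻ t : ℝ, expW W ω t
  else ENNReal.ofReal η * ∑' n : ℤ, expW W ω (η * n)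

/-- `E[sup_{t ∈ δℤ ∩ [0,T]} e^{W(t)}]`, the quantity whose linear growth rate in `T`
is the generalized Pickands constant `H_W^δ`. -/
def picksum {Ω : Type*} [MeasurableSpace Ω] (P : Measure Ω) (W : Ω → ℝ → ℝ)
    (δ T : ℝ) : ℝ≥0∞ :=
  ∫⁻ ω, ⨆ t ∈ grid δ ∩ Set.Icc 0 T, expW W ω t ∂P

/-- Stationarity of the Brown–Resnick process `ξ_W` built from `W`, expressed through the
equivalent characterization that the Poisson point processes `{Uᵢ + Wᵢ}` and `{Uᵢ + θ_h Wᵢ}`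
on path space have the same intensity measure: for every `h ∈ ℝ` and Borel `A ⊆ D`,
`∫ e^{-u} P(u + W ∈ A) du = ∫ e^{-u} P(u + θ_h W ∈ A) du`, where `θ_h W (s) = W(s - h)`. -/
def BRStationary {Ω : Type*} [MeasurableSpace Ω] (P : Measure Ω) (W : Ω → ℝ → ℝ) : Prop :=
  ∀ (h : ℝ) (A : Set (ℝ → ℝ)), MeasurableSet A →
    (∫⁻ u : ℝ, ENNReal.ofReal (Real.exp (-u)) * P {ω | (fun s => u + W ω s) ∈ A}) =
    (∫⁻ u : ℝ, ENNReal.ofReal (Real.exp (-u)) * P {ω | (fun s => u + W ω (s - h)) ∈ A})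

lemma grid_mem (δ : ℝ) (n : ℤ) : (δ * n : ℝ) ∈ grid δ := by
  unfold grid; split
  · trivial
  · exact ⟨n, rfl⟩

lemma grid_countable {δ : ℝ} (hδ : δ ≠ 0) : (grid δ).Countable := by
  unfold grid; rw [if_neg hδ]
  have : {t : ℝ | ∃ n : ℤ, t = δ * n} = Set.range (fun n : ℤ => δ * (n : ℝ)) := by
    ext t; simp [eq_comm]
  rw [this]; exact Set.countable_range _

def core (δ a b : ℝ) : Set ℝ :=
  if δ = 0 then (Set.range ((↑) : ℚ → ℝ) ∩ Set.Icc a b) ∪ {b}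
  else grid δ ∩ Set.Icc a b

lemma core_countable (δ a b : ℝ) : (core δ a b).Countable := by
  unfold core; split
  · exact ((Set.countable_range _).mono Set.inter_subset_left).union (Set.countable_singleton b)
  · exact (grid_countable ‹_›).mono Set.inter_subset_left

/-- sup of `exp ∘ f` over a right-dense subset `D` of `[a,b]` containing `b` equals
the sup over `[a,b]`, for right-continuous `f`. -/
lemma csup_eq {f : ℝ → ℝ} (hf : Cadlag f) {a b : ℝ} (hab : a ≤ b) {D : Set ℝ}
    (hD : D ⊆ Set.Icc a b) (hb : b ∈ D)
    (hd : ∀ t, a ≤ t → t < b → ∀ u, t < u → ∃ s ∈ D, t < s ∧ s < u) :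
    ⨆ t ∈ Set.Icc a b, ENNReal.ofReal (Real.exp (f t)) =
      ⨆ t ∈ D, ENNReal.ofReal (Real.exp (f t)) := by
  apply le_antisymm
  · refine iSup₂_le fun t ht => ?_
    rcases eq_or_lt_of_le ht.2 with rfl | htb
    · exact le_biSup (fun t => ENNReal.ofReal (Real.exp (f t))) hb
    · have hseq : ∀ n : ℕ, ∃ s ∈ D, t < s ∧ s < t + (b - t) / (n + 1) := by
        intro n
        refine hd t ht.1 htb _ ?_
        have : (0:ℝ) < (b - t) / (n + 1) := div_pos (by linarith) (by positivity)
        linarith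
      choose s hsD hs1 hs2 using hseq
      have haux : Tendsto (fun n : ℕ => t + (b - t) / (n + 1)) atTop (𝓝 t) := by
        have h0 : Tendsto (fun n : ℕ => (b - t) * (1 / (n + 1) : ℝ)) atTop (𝓝 0) := by
          simpa using tendsto_const_nhds.mul (tendsto_one_div_add_atTop_nhds_zero_nat (𝕜 := ℝ))
        have := h0.const_add t
        simpa [div_eq_mul_inv] using this
      have hlim : Tendsto s atTop (𝓝 t) := by
        refine tendsto_of_tendsto_of_tendsto_of_le_of_le tendsto_const_nhds haux
          (fun n => (hs1 n).le) (fun n => (hs2 n).le)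
      have htend : Tendsto (fun n => ENNReal.ofReal (Real.exp (f (s n)))) atTop
          (𝓝 (ENNReal.ofReal (Real.exp (f t)))) := by
        have h1 : Tendsto (fun n => f (s n)) atTop (𝓝 (f t)) := by
          refine (hf t).1.tendsto.comp ?_
          exact tendsto_nhdsWithin_of_tendsto_nhds_of_eventually_within _ hlim
            (Eventually.of_forall fun n => (hs1 n).le)
        exact (ENNReal.continuous_ofReal.tendsto _).comp
          ((Real.continuous_exp.tendsto _).comp h1)
      exact le_of_tendsto' htend fun n => le_biSup (fun t => ENNReal.ofReal (Real.exp (f t))) (hsD n)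
  · exact iSup₂_le fun t ht => le_biSup (fun t => ENNReal.ofReal (Real.exp (f t))) (hD ht)

lemma biSup_core_eq {Ω : Type*} {W : Ω → ℝ → ℝ} (hpath : ∀ ω, Cadlag (W ω)) (δ : ℝ)
    {a b : ℝ} (hab : a ≤ b) (ω : Ω) :
    ⨆ t ∈ grid δ ∩ Set.Icc a b, expW W ω t = ⨆ t ∈ core δ a b, expW W ω t := by
  unfold core grid
  split_ifs
  · rw [Set.univ_inter]
    refine csup_eq (hpath ω) hab ?_ (Or.inr rfl) ?_
    · rintro x (⟨-, hx⟩ | rfl)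
      · exact hx
      · exact ⟨hab, le_refl _⟩
    · intro t hat htb u htu
      obtain ⟨q, hq1, hq2⟩ := exists_rat_btwn (lt_min htu htb)
      exact ⟨(q:ℝ), Or.inl ⟨Set.mem_range_self q,
        le_trans hat hq1.le, ((lt_min_iff.mp hq2).2).le⟩, hq1, (lt_min_iff.mp hq2).1⟩
  · rfl


lemma key_cond (u : ℝ) (y : ℝ≥0∞) :
    (1 < ENNReal.ofReal (Real.exp u) * y) ↔ ENNReal.ofReal (Real.exp (-u)) < y := by
  set c := ENNReal.ofReal (Real.exp u) with hc
  have h0 : c ≠ 0 := by simp [hc, Real.exp_pos]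
  have htop : c ≠ ⊤ := ENNReal.ofReal_ne_top
  have hinv : ENNReal.ofReal (Real.exp (-u)) = c⁻¹ := by
    rw [Real.exp_neg, ENNReal.ofReal_inv_of_pos (Real.exp_pos u)]
  rw [hinv]
  constructor
  · intro hy
    by_contra hle
    push_neg at hle
    have h2 : c * y ≤ c * c⁻¹ := mul_le_mul_right hle c
    rw [ENNReal.mul_inv_cancel h0 htop] at h2
    exact absurd (lt_of_lt_of_le hy h2) (lt_irrefl 1)
  · intro hy
    have h2 : c * c⁻¹ < c * y := (ENNReal.mul_lt_mul_iff_right h0 htop).2 hy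
    rwa [ENNReal.mul_inv_cancel h0 htop] at h2

lemma exp_layer (y : ℝ≥0∞) :
    ∫⁻ u : ℝ in {u : ℝ | ENNReal.ofReal (Real.exp (-u)) < y},
      ENNReal.ofReal (Real.exp (-u)) = y := by
  rcases eq_or_ne y 0 with rfl | hy0
  · have : {u : ℝ | ENNReal.ofReal (Real.exp (-u)) < 0} = ∅ := by
      ext u; simp
    simp [this]
  rcases eq_or_ne y ⊤ with rfl | hytop
  · have hU : {u : ℝ | ENNReal.ofReal (Real.exp (-u)) < ⊤} = Set.univ := by
      ext u; simp [ENNReal.ofReal_lt_top]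
    rw [hU, Measure.restrict_univ]
    refine top_le_iff.mp ?_
    calc (⊤ : ℝ≥0∞) = 1 * volume (Set.Iic (0:ℝ)) := by rw [Real.volume_Iic]; simp
      _ = ∫⁻ u : ℝ in Set.Iic 0, 1 := (setLIntegral_const _ _).symm
      _ ≤ ∫⁻ u : ℝ in Set.Iic 0, ENNReal.ofReal (Real.exp (-u)) := by
          refine setLIntegral_mono (ENNReal.measurable_ofReal.comp (Real.measurable_exp.comp measurable_neg)) fun u hu => ?_
          rw [ENNReal.one_le_ofReal]
          exact Real.one_le_exp (by simpa using hu)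
      _ ≤ ∫⁻ u : ℝ, ENNReal.ofReal (Real.exp (-u)) := setLIntegral_le_lintegral _ _
  · set y' := y.toReal with hy'
    have hy'pos : 0 < y' := ENNReal.toReal_pos hy0 hytop
    have hyy : y = ENNReal.ofReal y' := (ENNReal.ofReal_toReal hytop).symm
    have hU : {u : ℝ | ENNReal.ofReal (Real.exp (-u)) < y} = Set.Ioi (-Real.log y') := by
      ext u
      rw [Set.mem_setOf_eq, hyy, ENNReal.ofReal_lt_ofReal_iff hy'pos,
        ← Real.lt_log_iff_exp_lt hy'pos]
      simp [neg_lt, Set.mem_Ioi]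
    rw [hU]
    have hint : IntegrableOn (fun u : ℝ => Real.exp (-u)) (Set.Ioi (-Real.log y')) := by
      simpa [neg_one_mul] using exp_neg_integrableOn_Ioi (-Real.log y') one_pos
    rw [← ofReal_integral_eq_lintegral_ofReal hint
      (Eventually.of_forall fun u => (Real.exp_pos _).le)]
    rw [integral_exp_neg_Ioi, neg_neg, Real.exp_log hy'pos, ← hyy]

lemma key_integral {Ω : Type*} [MeasurableSpace Ω] (P : Measure Ω) [IsProbabilityMeasure P]
    {Y : Ω → ℝ≥0∞} (hY : Measurable Y) :
    (∫⁻ u : ℝ, ENNReal.ofReal (Real.exp (-u)) * P {ω | 1 < ENNReal.ofReal (Real.exp u) * Y ω})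
      = ∫⁻ ω, Y ω ∂P := by
  have hset : ∀ u : ℝ, {ω | 1 < ENNReal.ofReal (Real.exp u) * Y ω}
      = {ω | ENNReal.ofReal (Real.exp (-u)) < Y ω} := by
    intro u; ext ω; exact key_cond u (Y ω)
  simp only [hset]
  set S : Set (ℝ × Ω) := {p | ENNReal.ofReal (Real.exp (-p.1)) < Y p.2} with hS
  have hmeas1 : Measurable fun p : ℝ × Ω => ENNReal.ofReal (Real.exp (-p.1)) :=
    ENNReal.measurable_ofReal.comp (Real.measurable_exp.comp (measurable_fst.neg))
  have hSm : MeasurableSet S := measurableSet_lt hmeas1 (hY.comp measurable_snd)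
  set F : ℝ × Ω → ℝ≥0∞ := S.indicator fun p => ENNReal.ofReal (Real.exp (-p.1)) with hF
  have hFm : Measurable F := hmeas1.indicator hSm
  have step1 : (∫⁻ u : ℝ, ENNReal.ofReal (Real.exp (-u))
      * P {ω | ENNReal.ofReal (Real.exp (-u)) < Y ω})
      = ∫⁻ u : ℝ, ∫⁻ ω, F (u, ω) ∂P := by
    refine lintegral_congr fun u => ?_
    have h1 : (fun ω => F (u, ω)) = Set.indicator {ω | ENNReal.ofReal (Real.exp (-u)) < Y ω}
        (fun _ => ENNReal.ofReal (Real.exp (-u))) := by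
      funext ω
      simp only [hF, hS, Set.indicator_apply, Set.mem_setOf_eq]
    rw [h1, lintegral_indicator_const (measurableSet_lt measurable_const hY)]
  have step2 : (∫⁻ u : ℝ, ∫⁻ ω, F (u, ω) ∂P) = ∫⁻ ω, ∫⁻ u : ℝ, F (u, ω) ∂volume ∂P :=
    lintegral_lintegral_swap hFm.aemeasurable
  have step3 : ∀ ω, (∫⁻ u : ℝ, F (u, ω)) = Y ω := by
    intro ω
    have h1 : (fun u : ℝ => F (u, ω)) = Set.indicator
        {u : ℝ | ENNReal.ofReal (Real.exp (-u)) < Y ω}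
        (fun u => ENNReal.ofReal (Real.exp (-u))) := by
      funext u
      simp only [hF, hS, Set.indicator_apply, Set.mem_setOf_eq]
    have hm : Measurable fun u : ℝ => ENNReal.ofReal (Real.exp (-u)) :=
      ENNReal.measurable_ofReal.comp (Real.measurable_exp.comp measurable_neg)
    have hUm : MeasurableSet {u : ℝ | ENNReal.ofReal (Real.exp (-u)) < Y ω} :=
      measurableSet_lt hm measurable_const
    rw [h1, lintegral_indicator hUm]
    exact exp_layer (Y ω)
  rw [step1, step2]
  exact lintegral_congr step3


section MainAux
variable {Ω : Type*} [MeasurableSpace Ω]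

lemma meas_biSup {W : Ω → ℝ → ℝ} (hWmeas : Measurable W) {D : Set ℝ} (hD : D.Countable)
    (h : ℝ) : Measurable fun ω => ⨆ t ∈ D, expW W ω (t - h) := by
  refine Measurable.biSup D hD fun t _ => ?_
  exact ENNReal.measurable_ofReal.comp
    (Real.measurable_exp.comp ((measurable_pi_apply (t - h)).comp hWmeas))

lemma meas_biSup0 {W : Ω → ℝ → ℝ} (hWmeas : Measurable W) {D : Set ℝ} (hD : D.Countable) :
    Measurable fun ω => ⨆ t ∈ D, expW W ω t := by
  refine Measurable.biSup D hD fun t _ => ?_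
  exact ENNReal.measurable_ofReal.comp
    (Real.measurable_exp.comp ((measurable_pi_apply t).comp hWmeas))

lemma meas_sup {W : Ω → ℝ → ℝ} (hWmeas : Measurable W) (hpath : ∀ ω, Cadlag (W ω))
    (δ : ℝ) {a b : ℝ} (hab : a ≤ b) :
    Measurable fun ω => ⨆ t ∈ grid δ ∩ Set.Icc a b, expW W ω t := by
  have : (fun ω => ⨆ t ∈ grid δ ∩ Set.Icc a b, expW W ω t)
      = fun ω => ⨆ t ∈ core δ a b, expW W ω t := funext (biSup_core_eq hpath δ hab)
  rw [this]
  exact meas_biSup0 hWmeas (core_countable δ a b)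

lemma biSup_add_exp (c : ℝ) (g : ℝ → ℝ) (D : Set ℝ) :
    (⨆ t ∈ D, ENNReal.ofReal (Real.exp (c + g t)))
      = ENNReal.ofReal (Real.exp c) * ⨆ t ∈ D, ENNReal.ofReal (Real.exp (g t)) := by
  rw [ENNReal.mul_iSup]
  refine iSup_congr fun t => ?_
  rw [ENNReal.mul_iSup]
  refine iSup_congr fun ht => ?_
  rw [Real.exp_add, ENNReal.ofReal_mul (Real.exp_nonneg c)]

lemma shift_eq (P : Measure Ω) [IsProbabilityMeasure P] {W : Ω → ℝ → ℝ}
    (hWmeas : Measurable W) (hpath : ∀ ω, Cadlag (W ω)) (hstat : BRStationary P W)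
    (δ : ℝ) {a b h : ℝ} (hab : a ≤ b) (hh : h ∈ grid δ) :
    ∫⁻ ω, ⨆ t ∈ grid δ ∩ Set.Icc a b, expW W ω t ∂P
      = ∫⁻ ω, ⨆ t ∈ grid δ ∩ Set.Icc (a - h) (b - h), expW W ω t ∂P := by
  set D := core δ a b with hD
  have hDc : D.Countable := core_countable δ a b
  set A : Set (ℝ → ℝ) := {f | 1 < ⨆ t ∈ D, ENNReal.ofReal (Real.exp (f t))} with hA
  have hAm : MeasurableSet A := by
    have hm : Measurable fun f : ℝ → ℝ => ⨆ t ∈ D, ENNReal.ofReal (Real.exp (f t)) :=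
      Measurable.biSup D hDc fun t _ =>
        ENNReal.measurable_ofReal.comp (Real.measurable_exp.comp (measurable_pi_apply t))
    exact measurableSet_lt measurable_const hm
  have key := hstat h A hAm
  have hY : Measurable fun ω => ⨆ t ∈ D, expW W ω t := meas_biSup0 hWmeas hDc
  have hY' : Measurable fun ω => ⨆ t ∈ D, expW W ω (t - h) := meas_biSup hWmeas hDc h
  have hL : ∀ u : ℝ, {ω | (fun s => u + W ω s) ∈ A}
      = {ω | 1 < ENNReal.ofReal (Real.exp u) * ⨆ t ∈ D, expW W ω t} := by
    intro u; ext ω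
    simp only [hA, Set.mem_setOf_eq]
    rw [biSup_add_exp u (W ω) D]
    rfl
  have hR : ∀ u : ℝ, {ω | (fun s => u + W ω (s - h)) ∈ A}
      = {ω | 1 < ENNReal.ofReal (Real.exp u) * ⨆ t ∈ D, expW W ω (t - h)} := by
    intro u; ext ω
    simp only [hA, Set.mem_setOf_eq]
    rw [biSup_add_exp u (fun t => W ω (t - h)) D]
    rfl
  simp only [hL, hR] at key
  rw [key_integral P hY, key_integral P hY'] at key
  have hpt : ∀ ω, (⨆ t ∈ D, expW W ω (t - h))
      = ⨆ t ∈ grid δ ∩ Set.Icc (a - h) (b - h), expW W ω t := by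
    intro ω
    by_cases hδ0 : δ = 0
    · subst hδ0
      have hgr : grid 0 = Set.univ := by simp [grid]
      rw [hgr, Set.univ_inter]
      have himg : (⨆ t ∈ D, expW W ω (t - h))
          = ⨆ s ∈ (fun t => t - h) '' D, expW W ω s := by
        rw [iSup_image]
      rw [himg]
      have hDeq0 : D = (Set.range ((↑) : ℚ → ℝ) ∩ Set.Icc a b) ∪ {b} := by
        rw [hD]; unfold core; rw [if_pos rfl]
      refine (csup_eq (hpath ω) (by linarith) ?_ ?_ ?_).symm
      · rintro s ⟨t, ht, rfl⟩
        rw [hDeq0] at ht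
        have h3 : t ∈ Set.Icc a b := by
          rcases ht with ⟨-, h1⟩ | h1
          · exact h1
          · rw [Set.mem_singleton_iff] at h1; subst h1; exact ⟨hab, le_refl _⟩
        simp only [Set.mem_Icc]
        exact ⟨by linarith [h3.1], by linarith [h3.2]⟩
      · refine ⟨b, ?_, rfl⟩
        rw [hDeq0]; exact Or.inr rfl
      · intro t hat htb u htu
        have hmin : t + h < min (u + h) b := lt_min_iff.mpr ⟨by linarith, by linarith⟩
        obtain ⟨q, hq1, hq2⟩ := exists_rat_btwn hmin
        rcases lt_min_iff.mp hq2 with ⟨hqu, hqb⟩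
        refine ⟨(q:ℝ) - h, ⟨(q:ℝ), ?_, rfl⟩, by linarith, by linarith⟩
        rw [hDeq0]
        exact Or.inl ⟨Set.mem_range_self q, Set.mem_Icc.mpr ⟨by linarith, hqb.le⟩⟩
    · -- δ ≠ 0 : D = grid δ ∩ Icc a b
      have hDeq : D = grid δ ∩ Set.Icc a b := by rw [hD]; unfold core; rw [if_neg hδ0]
      have hgr : grid δ = {t : ℝ | ∃ n : ℤ, t = δ * n} := by unfold grid; rw [if_neg hδ0]
      obtain ⟨m, hm⟩ : ∃ m : ℤ, h = δ * m := by rw [hgr] at hh; exact hh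
      apply le_antisymm
      · refine iSup₂_le fun t ht => ?_
        rw [hDeq, hgr] at ht
        obtain ⟨⟨n, hn⟩, h1, h2⟩ := ht
        refine le_biSup (fun t => expW W ω t) ⟨?_, by constructor <;> linarith⟩
        rw [hgr]
        exact ⟨n - m, by push_cast; rw [hn, hm]; ring⟩
      · refine iSup₂_le fun s hs => ?_
        rw [hgr] at hs
        obtain ⟨⟨n, hn⟩, h1, h2⟩ := hs
        have hmem : s + h ∈ D := by
          rw [hDeq]
          refine ⟨?_, by constructor <;> linarith⟩
          rw [hgr]
          exact ⟨n + m, by push_cast; rw [hn, hm]; ring⟩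
        have := le_biSup (fun t => expW W ω (t - h)) hmem
        simpa using this
  calc ∫⁻ ω, ⨆ t ∈ grid δ ∩ Set.Icc a b, expW W ω t ∂P
      = ∫⁻ ω, ⨆ t ∈ D, expW W ω t ∂P := lintegral_congr (biSup_core_eq hpath δ hab)
    _ = ∫⁻ ω, ⨆ t ∈ D, expW W ω (t - h) ∂P := key
    _ = ∫⁻ ω, ⨆ t ∈ grid δ ∩ Set.Icc (a - h) (b - h), expW W ω t ∂P := lintegral_congr hpt

lemma block_le (P : Measure Ω) [IsProbabilityMeasure P] {W : Ω → ℝ → ℝ}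
    (hWmeas : Measurable W) (hpath : ∀ ω, Cadlag (W ω)) (hstat : BRStationary P W)
    {δ : ℝ} (hδ : 0 ≤ δ) {S : ℝ} (hS : 0 < S) {x : ℝ} (hx : 0 ≤ x) :
    ∫⁻ ω, ⨆ t ∈ grid δ ∩ Set.Icc x (x + S), expW W ω t ∂P ≤ picksum P W δ S := by
  obtain ⟨h, hhg, hxh, hpos⟩ :
      ∃ h, h ∈ grid δ ∧ x ≤ h ∧ ∀ t ∈ grid δ, x - h ≤ t → 0 ≤ t := by
    rcases eq_or_lt_of_le hδ with hδ0 | hδ0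
    · refine ⟨x, ?_, le_refl x, fun t _ ht => by linarith⟩
      unfold grid; rw [if_pos hδ0.symm]; trivial
    · have hδne : δ ≠ 0 := ne_of_gt hδ0
      refine ⟨δ * ⌈x / δ⌉, ?_, ?_, ?_⟩
      · unfold grid; rw [if_neg hδne]; exact ⟨⌈x / δ⌉, rfl⟩
      · have := Int.le_ceil (x / δ)
        calc x = x / δ * δ := (div_mul_cancel₀ x hδne).symm
          _ ≤ (⌈x / δ⌉ : ℝ) * δ := mul_le_mul_of_nonneg_right this hδ0.le
          _ = δ * ⌈x / δ⌉ := mul_comm _ _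
      · intro t htg hge
        have hceil : (⌈x / δ⌉ : ℝ) < x / δ + 1 := Int.ceil_lt_add_one (x / δ)
        have h1 : x - δ * ⌈x / δ⌉ > -δ := by
          have : δ * (⌈x / δ⌉ : ℝ) < δ * (x / δ + 1) := by
            exact (mul_lt_mul_iff_right₀ hδ0).mpr hceil
          have h2 : δ * (x / δ + 1) = x + δ := by field_simp
          linarith
        obtain ⟨n, hn⟩ : ∃ n : ℤ, t = δ * n := by
          unfold grid at htg; rw [if_neg hδne] at htg; exact htg
        have hn1 : (-1 : ℝ) < (n : ℝ) := by
          by_contra hcon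
          push_neg at hcon
          have : δ * (n:ℝ) ≤ δ * (-1:ℝ) := (mul_le_mul_iff_right₀ hδ0).mpr hcon
          rw [← hn] at this
          linarith
        have : (0 : ℤ) ≤ n := by exact_mod_cast (by exact_mod_cast hn1 : (-1:ℤ) < n)
        rw [hn]
        positivity
  calc ∫⁻ ω, ⨆ t ∈ grid δ ∩ Set.Icc x (x + S), expW W ω t ∂P
      = ∫⁻ ω, ⨆ t ∈ grid δ ∩ Set.Icc (x - h) (x + S - h), expW W ω t ∂P :=
        shift_eq P hWmeas hpath hstat δ (by linarith) hhg
    _ ≤ picksum P W δ S := by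
        refine lintegral_mono fun ω => ?_
        refine iSup₂_le fun t ht => ?_
        refine le_biSup (fun t => expW W ω t) ⟨ht.1, ?_, ?_⟩
        · exact hpos t ht.1 ht.2.1
        · have := ht.2.2; linarith

lemma picksum_le (P : Measure Ω) [IsProbabilityMeasure P] {W : Ω → ℝ → ℝ}
    (hWmeas : Measurable W) (hpath : ∀ ω, Cadlag (W ω)) (hstat : BRStationary P W)
    {δ : ℝ} (hδ : 0 ≤ δ) {S : ℝ} (hS : 0 < S) (T : ℝ) :
    picksum P W δ T ≤ (⌊T / S⌋₊ + 1 : ℕ) * picksum P W δ S := by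
  set N := ⌊T / S⌋₊ with hN
  have hcover : ∀ ω, (⨆ t ∈ grid δ ∩ Set.Icc 0 T, expW W ω t)
      ≤ ∑ i ∈ Finset.range (N + 1),
          ⨆ t ∈ grid δ ∩ Set.Icc ((i : ℝ) * S) ((i : ℝ) * S + S), expW W ω t := by
    intro ω
    refine iSup₂_le fun t ht => ?_
    have ht0 : 0 ≤ t := ht.2.1
    set i := ⌊t / S⌋₊ with hi
    have hiN : i ∈ Finset.range (N + 1) := by
      simp only [Finset.mem_range]
      exact Nat.lt_succ_of_le (Nat.floor_mono (by gcongr; exact ht.2.2))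
    have hfl : (i : ℝ) ≤ t / S := Nat.floor_le (div_nonneg ht0 hS.le)
    have h1 : (i : ℝ) * S ≤ t := by
      calc (i : ℝ) * S ≤ t / S * S := mul_le_mul_of_nonneg_right hfl hS.le
        _ = t := div_mul_cancel₀ t hS.ne'
    have h2 : t ≤ (i : ℝ) * S + S := by
      have hlt : t / S < (i : ℝ) + 1 := Nat.lt_floor_add_one (t / S)
      calc t = t / S * S := (div_mul_cancel₀ t hS.ne').symm
        _ ≤ ((i : ℝ) + 1) * S := mul_le_mul_of_nonneg_right hlt.le hS.le
        _ = (i : ℝ) * S + S := by ring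
    calc expW W ω t
        ≤ ⨆ t ∈ grid δ ∩ Set.Icc ((i : ℝ) * S) ((i : ℝ) * S + S), expW W ω t :=
          le_biSup (fun t => expW W ω t) ⟨ht.1, h1, h2⟩
      _ ≤ _ := Finset.single_le_sum (f := fun i : ℕ =>
            ⨆ t ∈ grid δ ∩ Set.Icc ((i : ℝ) * S) ((i : ℝ) * S + S), expW W ω t)
            (fun _ _ => zero_le) hiN
  calc picksum P W δ T
      ≤ ∫⁻ ω, ∑ i ∈ Finset.range (N + 1),
          ⨆ t ∈ grid δ ∩ Set.Icc ((i : ℝ) * S) ((i : ℝ) * S + S), expW W ω t ∂P :=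
        lintegral_mono hcover
    _ = ∑ i ∈ Finset.range (N + 1), ∫⁻ ω,
          ⨆ t ∈ grid δ ∩ Set.Icc ((i : ℝ) * S) ((i : ℝ) * S + S), expW W ω t ∂P :=
        lintegral_finset_sum _ (fun i _ => meas_sup hWmeas hpath δ (by linarith))
    _ ≤ ∑ _i ∈ Finset.range (N + 1), picksum P W δ S :=
        Finset.sum_le_sum fun i _ =>
          block_le P hWmeas hpath hstat hδ hS (by positivity)
    _ = (N + 1 : ℕ) * picksum P W δ S := by
        rw [Finset.sum_const, Finset.card_range, nsmul_eq_mul]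


end MainAux

/-- **Existence of generalized Pickands constants (Section 2.1, eq. (10)).**
Let `W` be such that the corresponding max-stable Brown–Resnick process `ξ_W` is stationary and
has càdlàg paths; for compact `E ⊆ ℝ` set `H_W(E) = E[sup_{t ∈ E} e^{W(t)}]`, which is finite
(by the càdlàg property of `ξ_W`, taken here as a hypothesis).  Then for every `δ ≥ 0`
the limit defining the generalized Pickands constant exists and
`H_W^δ = lim_{T→∞} H_W(δℤ ∩ [0,T])/T = inf_{T>0} H_W(δℤ ∩ [0,T])/T ∈ [0,∞)`;
moreover, if `δ > 0` then `H_W^δ ≤ 1/δ`. -/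
theorem pickands_constant_exists_fekete
    {Ω : Type*} [MeasurableSpace Ω] (P : Measure Ω) [IsProbabilityMeasure P]
    (W : Ω → ℝ → ℝ) (hWmeas : Measurable W)
    (hpath : ∀ ω, Cadlag (W ω))
    (hW0 : ∀ᵐ ω ∂P, W ω 0 = 0)
    (hmarg : ∀ t : ℝ, ∫⁻ ω, expW W ω t ∂P = 1)
    (hstat : BRStationary P W)
    (hfin : ∀ E : Set ℝ, IsCompact E → (∫⁻ ω, ⨆ t ∈ E, expW W ω t ∂P) < ⊤)
    (δ : ℝ) (hδ : 0 ≤ δ) :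
    Tendsto (fun T : ℝ => picksum P W δ T / ENNReal.ofReal T) atTop
        (𝓝 (⨅ T ∈ Set.Ioi (0 : ℝ), picksum P W δ T / ENNReal.ofReal T)) ∧
      (⨅ T ∈ Set.Ioi (0 : ℝ), picksum P W δ T / ENNReal.ofReal T) < ⊤ ∧
      (0 < δ →
        (⨅ T ∈ Set.Ioi (0 : ℝ), picksum P W δ T / ENNReal.ofReal T)
          ≤ (ENNReal.ofReal δ)⁻¹) := by
  set I := ⨅ T ∈ Set.Ioi (0 : ℝ), picksum P W δ T / ENNReal.ofReal T with hI
  have hfing : ∀ S : ℝ, picksum P W δ S < ⊤ := by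
    intro S
    refine lt_of_le_of_lt ?_ (hfin (Set.Icc 0 S) isCompact_Icc)
    refine lintegral_mono fun ω => ?_
    exact biSup_mono fun t ht => ht.2
  have hIle : ∀ S : ℝ, 0 < S → I ≤ picksum P W δ S / ENNReal.ofReal S := by
    intro S hS
    exact biInf_le _ hS
  have hItop : I < ⊤ := by
    refine lt_of_le_of_lt (hIle 1 one_pos) ?_
    rw [ENNReal.ofReal_one, div_one]
    exact hfing 1
  have hupper : ∀ c : ℝ≥0∞, I < c →
      ∀ᶠ T in atTop, picksum P W δ T / ENNReal.ofReal T < c := by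
    intro c hc
    obtain ⟨S, hS0, hSc⟩ : ∃ S : ℝ, 0 < S ∧ picksum P W δ S / ENNReal.ofReal S < c := by
      rw [hI] at hc
      simp only [iInf_lt_iff, Set.mem_Ioi] at hc
      obtain ⟨S, hS0, h⟩ := hc
      exact ⟨S, hS0, h⟩
    set q := picksum P W δ S with hq
    have hqtop : q ≠ ⊤ := (hfing S).ne
    have htendaux : Tendsto (fun T : ℝ => q / ENNReal.ofReal S + q * ENNReal.ofReal (1 / T))
        atTop (𝓝 (q / ENNReal.ofReal S)) := by
      have h0 : Tendsto (fun T : ℝ => ENNReal.ofReal (1 / T)) atTop (𝓝 0) := by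
        have := ENNReal.tendsto_ofReal (tendsto_inv_atTop_zero (𝕜 := ℝ))
        simpa [one_div, ENNReal.ofReal_zero] using this
      have h1 : Tendsto (fun T : ℝ => q * ENNReal.ofReal (1 / T)) atTop (𝓝 0) := by
        have := ENNReal.Tendsto.const_mul h0 (Or.inr hqtop)
        simpa using this
      have := (tendsto_const_nhds (x := q / ENNReal.ofReal S) (f := atTop)).add h1
      simpa using this
    have hev2 : ∀ᶠ T in atTop,
        q / ENNReal.ofReal S + q * ENNReal.ofReal (1 / T) < c :=
      htendaux.eventually_lt_const hSc
    have hev1 : ∀ᶠ T in atTop, picksum P W δ T / ENNReal.ofReal T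
        ≤ q / ENNReal.ofReal S + q * ENNReal.ofReal (1 / T) := by
      filter_upwards [eventually_ge_atTop 1] with T hT1
      have hT0 : (0:ℝ) < T := lt_of_lt_of_le one_pos hT1
      have hb1 : picksum P W δ T / ENNReal.ofReal T
          ≤ ((⌊T / S⌋₊ + 1 : ℕ) : ℝ≥0∞) * q / ENNReal.ofReal T :=
        ENNReal.div_le_div_right (picksum_le P hWmeas hpath hstat hδ hS0 T) _
      have hb2 : ((⌊T / S⌋₊ + 1 : ℕ) : ℝ≥0∞) ≤ ENNReal.ofReal (T / S + 1) := by
        have hfl : ((⌊T / S⌋₊ : ℝ)) ≤ T / S := Nat.floor_le (by positivity)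
        calc ((⌊T / S⌋₊ + 1 : ℕ) : ℝ≥0∞) = ENNReal.ofReal ((⌊T / S⌋₊ + 1 : ℕ) : ℝ) := by
              rw [ENNReal.ofReal_natCast]
          _ ≤ ENNReal.ofReal (T / S + 1) := by
              apply ENNReal.ofReal_le_ofReal
              push_cast
              linarith
      have hb3 : ENNReal.ofReal (T / S + 1) * q / ENNReal.ofReal T
          = q / ENNReal.ofReal S + q * ENNReal.ofReal (1 / T) := by
        rw [mul_comm, mul_div_assoc, ← ENNReal.ofReal_div_of_pos hT0]
        have harith : (T / S + 1) / T = 1 / S + 1 / T := by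
          field_simp
        rw [harith, ENNReal.ofReal_add (by positivity) (by positivity), mul_add]
        congr 1
        rw [one_div, ENNReal.ofReal_inv_of_pos hS0, div_eq_mul_inv]
      calc picksum P W δ T / ENNReal.ofReal T
          ≤ ((⌊T / S⌋₊ + 1 : ℕ) : ℝ≥0∞) * q / ENNReal.ofReal T := hb1
        _ ≤ ENNReal.ofReal (T / S + 1) * q / ENNReal.ofReal T := by gcongr
        _ = q / ENNReal.ofReal S + q * ENNReal.ofReal (1 / T) := hb3
    filter_upwards [hev1, hev2] with T h1 h2 using lt_of_le_of_lt h1 h2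
  refine ⟨?_, hItop, ?_⟩
  · rw [tendsto_order]
    constructor
    · intro c hc
      filter_upwards [eventually_gt_atTop 0] with T hT
      exact lt_of_lt_of_le hc (hIle T hT)
    · intro c hc
      exact hupper c hc
  · intro hδpos
    have hδne : δ ≠ 0 := ne_of_gt hδpos
    have hsing : ∀ T : ℝ, 0 < T → T < δ → picksum P W δ T = 1 := by
      intro T hT0 hTδ
      have hset : grid δ ∩ Set.Icc 0 T = {0} := by
        ext t
        constructor
        · rintro ⟨htg, h0, hT⟩
          obtain ⟨n, hn⟩ : ∃ n : ℤ, t = δ * n := by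
            unfold grid at htg; rw [if_neg hδne] at htg; exact htg
          have hn0 : (0:ℝ) ≤ (n:ℝ) := by
            by_contra hcon
            push_neg at hcon
            have hz : (n:ℤ) < 0 := by exact_mod_cast hcon
            have hz1 : (n:ℤ) ≤ -1 := by omega
            have h1 : (n:ℝ) ≤ -1 := by exact_mod_cast hz1
            have : δ * (n:ℝ) ≤ δ * (-1:ℝ) := (mul_le_mul_iff_right₀ hδpos).mpr h1
            rw [← hn] at this
            linarith
          have hn1 : (n:ℝ) < 1 := by
            by_contra hcon
            push_neg at hcon
            have : δ * (1:ℝ) ≤ δ * (n:ℝ) := (mul_le_mul_iff_right₀ hδpos).mpr hcon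
            rw [← hn] at this
            linarith
          have : n = 0 := by
            have h1 : (0:ℤ) ≤ n := by exact_mod_cast hn0
            have h2 : n < 1 := by exact_mod_cast hn1
            omega
          simp [hn, this]
        · rintro rfl
          refine ⟨?_, le_refl 0, hT0.le⟩
          unfold grid; rw [if_neg hδne]
          exact ⟨0, by simp⟩
      unfold picksum
      rw [hset]
      simp only [iSup_singleton]
      exact hmarg 0
    have h2 : ∀ T ∈ Set.Ioo (0:ℝ) δ, ENNReal.ofReal T ≤ I⁻¹ := by
      intro T hT
      have hle : I ≤ (ENNReal.ofReal T)⁻¹ := by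
        have := hIle T hT.1
        rwa [hsing T hT.1 hT.2, one_div] at this
      calc ENNReal.ofReal T = ((ENNReal.ofReal T)⁻¹)⁻¹ := (inv_inv _).symm
        _ ≤ I⁻¹ := ENNReal.inv_le_inv' hle
    have h3 : ENNReal.ofReal δ ≤ I⁻¹ := by
      have htd : Tendsto (fun T : ℝ => ENNReal.ofReal T) (𝓝[<] δ) (𝓝 (ENNReal.ofReal δ)) :=
        (ENNReal.continuous_ofReal.tendsto δ).mono_left nhdsWithin_le_nhds
      refine le_of_tendsto htd ?_
      filter_upwards [Ioo_mem_nhdsLT hδpos] with T hT using h2 T hT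
    calc I = (I⁻¹)⁻¹ := (inv_inv I).symm
      _ ≤ (ENNReal.ofReal δ)⁻¹ := ENNReal.inv_le_inv' h3
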